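/- For every natural numbers n, k with k ≥ 1, there is a 3-colouring of E(K_n) whose largest monochromatic k-connected subgraph has at most (n-k+3)/2 vertices; that is, m(n,3,1,k) ≤ (n-k+3)/2. -/

import Mathlib

def IsKConnected {V : Type*} (k : ℕ) (G : SimpleGraph V) : Prop :=
  k < Nat.card V ∧ ∀ S : Set V, S.ncard < k → (G.induce Sᶜ).Connected

def colorGraph (n r : ℕ) (f : Sym2 (Fin n) → Fin r) (i : Fin r) :
    SimpleGraph (Fin n) where
  Adj a b := a ≠ b ∧ f s(a, b) = i
  symm := ⟨fun a b h => ⟨h.1.symm, by rw [Sym2.eq_swap]; exact h.2⟩⟩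
  loopless := ⟨fun a h => h.1 rfl⟩

namespace Stmt15
open SimpleGraph

/-! ### Connectivity helpers -/

lemma walk_closed {V : Type*} {G : SimpleGraph V} {X : Set V}
    (h : ∀ u v : V, G.Adj u v → u ∈ X → v ∈ X) :
    ∀ {x y : V} (_ : G.Walk x y), x ∈ X → y ∈ X := by
  intro x y p
  induction p with
  | nil => exact id
  | cons hadj p ih => intro hx; exact ih (h _ _ hadj hx)

lemma split {n k : ℕ} {H : SimpleGraph (Fin n)} {A : Set (Fin n)}
    (hA : IsKConnected k (H.induce A)) (S X : Set (Fin n))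
    (hS : S.ncard < k)
    (hclosed : ∀ u v : Fin n, H.Adj u v → u ∈ A → v ∈ A → u ∉ S → v ∉ S → u ∈ X → v ∈ X)
    {x y : Fin n} (hx : x ∈ A) (hxS : x ∉ S) (hxX : x ∈ X)
    (hy : y ∈ A) (hyS : y ∉ S) : y ∈ X := by
  classical
  set S' : Set ↥A := {a : ↥A | (a : Fin n) ∈ S} with hS'def
  have hS'card : S'.ncard < k := by
    refine lt_of_le_of_lt ?_ hS
    have himg : S'.ncard = (Subtype.val '' S').ncard :=
      (Set.ncard_image_of_injective S' Subtype.val_injective).symm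
    rw [himg]
    exact Set.ncard_le_ncard (by rintro _ ⟨a, ha, rfl⟩; exact ha) (Set.toFinite S)
  have hconn := hA.2 S' hS'card
  have hx' : (⟨x, hx⟩ : ↥A) ∈ S'ᶜ := hxS
  have hy' : (⟨y, hy⟩ : ↥A) ∈ S'ᶜ := hyS
  obtain ⟨p⟩ := hconn.preconnected ⟨⟨x, hx⟩, hx'⟩ ⟨⟨y, hy⟩, hy'⟩
  exact walk_closed (G := ((H.induce A).induce S'ᶜ))
      (X := {v : ↥(S'ᶜ) | ((v : ↥A) : Fin n) ∈ X})
      (fun u v huv hu => hclosed _ _ huv (u : ↥A).2 (v : ↥A).2 u.2 v.2 hu) p hxX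

lemma exists_adj_of_ne {V : Type*} {G : SimpleGraph V} (hconn : G.Connected)
    {x y : V} (hxy : x ≠ y) : ∃ u v : V, G.Adj u v := by
  obtain ⟨p⟩ := hconn.preconnected x y
  cases p with
  | nil => exact absurd rfl hxy
  | cons hadj _ => exact ⟨_, _, hadj⟩

/-! ### Master structural lemma -/

lemma master {n k : ℕ} (hk : 1 ≤ k) {H : SimpleGraph (Fin n)}
    {A : Set (Fin n)} (B1 B2 P Q : Set (Fin n))
    (hHle : ∀ u v : Fin n, H.Adj u v →
      (u ∈ B1 ∧ v ∈ B1) ∨ (u ∈ B2 ∧ v ∈ B2) ∨ (u ∈ P ∧ v ∈ Q) ∨ (u ∈ Q ∧ v ∈ P))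
    (hcov : ∀ v : Fin n, v ∈ B1 ∨ v ∈ B2 ∨ v ∈ P ∨ v ∈ Q)
    (hd1 : ∀ v : Fin n, (v ∈ B1 ∨ v ∈ B2) → ¬(v ∈ P ∨ v ∈ Q))
    (hsep : (B1 ∩ B2).ncard < k) (hP : P.ncard < k)
    (hA : IsKConnected k (H.induce A)) : A ⊆ B1 ∨ A ⊆ B2 := by
  classical
  have hAcard : k < A.ncard := by
    have h1 := hA.1; rwa [Nat.card_coe_set_eq] at h1
  have hempty : (∅ : Set (Fin n)).ncard < k := by simp; omega
  by_cases hside : ∃ a, a ∈ A ∧ (a ∈ P ∨ a ∈ Q)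
  · exfalso
    obtain ⟨a, haA, haPQ⟩ := hside
    have hAPQ : ∀ b ∈ A, b ∈ P ∨ b ∈ Q := by
      intro b hbA
      by_contra hbB
      have hbX : b ∈ {v : Fin n | v ∈ P ∨ v ∈ Q} := by
        refine split hA ∅ {v | v ∈ P ∨ v ∈ Q} hempty ?_ haA (by simp) haPQ hbA (by simp)
        intro u v hadj _ _ _ _ huX
        rcases hHle u v hadj with ⟨h1, _⟩ | ⟨h1, _⟩ | ⟨_, h2⟩ | ⟨_, h2⟩
        · exact absurd huX (hd1 u (Or.inl h1))
        · exact absurd huX (hd1 u (Or.inr h1))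
        · exact Or.inr h2
        · exact Or.inl h2
      exact hbB hbX
    set S' : Set ↥A := {a : ↥A | (a : Fin n) ∈ P} with hS'def
    have hS'card : S'.ncard < k := by
      refine lt_of_le_of_lt ?_ hP
      have himg : S'.ncard = (Subtype.val '' S').ncard :=
        (Set.ncard_image_of_injective S' Subtype.val_injective).symm
      rw [himg]
      exact Set.ncard_le_ncard (by rintro _ ⟨c, hc, rfl⟩; exact hc) (Set.toFinite P)
    have hconn := hA.2 S' hS'card
    have hle1 : A.ncard ≤ (A \ P).ncard + P.ncard := by
      refine le_trans (Set.ncard_le_ncard (t := (A \ P) ∪ P) ?_ (Set.toFinite _))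
        (Set.ncard_union_le _ _)
      intro z hz
      by_cases hzP : z ∈ P
      · exact Or.inr hzP
      · exact Or.inl ⟨hz, hzP⟩
    have h2 : 1 < (A \ P).ncard := by omega
    rw [Set.one_lt_ncard_iff (Set.toFinite _)] at h2
    obtain ⟨x, y, hxm, hym, hxy⟩ := h2
    have hx' : (⟨x, hxm.1⟩ : ↥A) ∈ S'ᶜ := hxm.2
    have hy' : (⟨y, hym.1⟩ : ↥A) ∈ S'ᶜ := hym.2
    have hne : (⟨⟨x, hxm.1⟩, hx'⟩ : ↥(S'ᶜ)) ≠ ⟨⟨y, hym.1⟩, hy'⟩ := by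
      intro hcon
      exact hxy (congrArg (fun z : ↥(S'ᶜ) => ((z : ↥A) : Fin n)) hcon)
    obtain ⟨u, v, huv⟩ := exists_adj_of_ne hconn hne
    have hadj : H.Adj ((u : ↥A) : Fin n) ((v : ↥A) : Fin n) := huv
    have huA : ((u : ↥A) : Fin n) ∈ A := (u : ↥A).2
    have huP : ((u : ↥A) : Fin n) ∉ P := u.2
    have hvP : ((v : ↥A) : Fin n) ∉ P := v.2
    have huQ : ((u : ↥A) : Fin n) ∈ Q := (hAPQ _ huA).resolve_left huP
    rcases hHle _ _ hadj with ⟨h1, _⟩ | ⟨h1, _⟩ | ⟨h1, _⟩ | ⟨_, h2⟩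
    · exact hd1 _ (Or.inl h1) (Or.inr huQ)
    · exact hd1 _ (Or.inr h1) (Or.inr huQ)
    · exact huP h1
    · exact hvP h2
  · have hAB : ∀ b ∈ A, b ∈ B1 ∨ b ∈ B2 := by
      intro b hb
      rcases hcov b with h | h | h | h
      · exact Or.inl h
      · exact Or.inr h
      · exact absurd ⟨b, hb, Or.inl h⟩ hside
      · exact absurd ⟨b, hb, Or.inr h⟩ hside
    by_cases hx1 : ∃ x, x ∈ A ∧ x ∈ B1 ∧ x ∉ B2
    · left
      obtain ⟨x, hxA, hxB1, hxB2⟩ := hx1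
      intro y hyA
      by_cases hyS : y ∈ B1 ∩ B2
      · exact hyS.1
      · refine split hA (B1 ∩ B2) B1 hsep ?_ hxA (fun h => hxB2 h.2) hxB1 hyA hyS
        intro u v hadj hu hv huS _ huX
        rcases hHle u v hadj with ⟨_, h2⟩ | ⟨h1, _⟩ | ⟨h1, _⟩ | ⟨h1, _⟩
        · exact h2
        · exact absurd ⟨huX, h1⟩ huS
        · exact absurd ⟨u, hu, Or.inl h1⟩ hside
        · exact absurd ⟨u, hu, Or.inr h1⟩ hside
    · right
      intro y hy
      rcases hAB y hy with h | h
      · by_cases h2 : y ∈ B2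
        · exact h2
        · exact absurd ⟨y, hy, h, h2⟩ hx1
      · exact h

/-! ### counting helper -/

lemma ncard_le_of_val_mem {n : ℕ} (A : Set (Fin n)) (F : Finset ℕ)
    (h : ∀ a ∈ A, (a : Fin n).val ∈ F) : A.ncard ≤ F.card := by
  have h1 : A.ncard = (Fin.val '' A).ncard :=
    (Set.ncard_image_of_injective A Fin.val_injective).symm
  rw [h1]
  have h2 : (Fin.val '' A) ⊆ ↑F := by rintro _ ⟨a, ha, rfl⟩; exact h a ha
  calc (Fin.val '' A).ncard ≤ (↑F : Set ℕ).ncard :=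
        Set.ncard_le_ncard h2 (F.finite_toSet)
    _ = F.card := Set.ncard_coe_finset F

/-! ### Main construction : parameters -/

def Wp (n k : ℕ) : ℕ := if 2 ≤ k ∧ (n - 3*(k-2)) % 4 = 2 then k-1 else k-2
def Mm (n k : ℕ) : ℕ := n - 3 * Wp n k
def Y1 (n k : ℕ) : ℕ := Mm n k / 4 + (if 1 ≤ Mm n k % 4 then 1 else 0)
def Y2 (n k : ℕ) : ℕ := Mm n k / 4 + (if 2 ≤ Mm n k % 4 then 1 else 0)
def Y3 (n k : ℕ) : ℕ := Mm n k / 4 + (if 3 ≤ Mm n k % 4 then 1 else 0)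
def Y4 (n k : ℕ) : ℕ := Mm n k / 4
def T1 (n k : ℕ) : ℕ := Y1 n k
def T2 (n k : ℕ) : ℕ := T1 n k + Y2 n k
def T3 (n k : ℕ) : ℕ := T2 n k + Y3 n k
def T4 (n k : ℕ) : ℕ := T3 n k + Y4 n k
def T5 (n k : ℕ) : ℕ := T4 n k + Wp n k
def T6 (n k : ℕ) : ℕ := T5 n k + Wp n k

lemma main_arith (n k : ℕ) (hk : 1 ≤ k) (hmain : 3*(k-1) < n) :
    Wp n k < k ∧ k ≤ n ∧ T6 n k + Wp n k = n ∧
    2*(Y1 n k + Y2 n k + Wp n k) + k ≤ n + 3 ∧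
    Y2 n k ≤ Y1 n k ∧ Y3 n k ≤ Y2 n k ∧ Y4 n k ≤ Y3 n k := by
  unfold T6 T5 T4 T3 T2 T1 Y1 Y2 Y3 Y4 Mm Wp
  split_ifs <;> omega

lemma Tarith (n k : ℕ) :
    T2 n k = Y1 n k + Y2 n k ∧ T5 n k - T4 n k = Wp n k ∧
    T1 n k = Y1 n k ∧ T3 n k - T2 n k = Y3 n k ∧ T6 n k - T5 n k = Wp n k ∧
    T2 n k - T1 n k = Y2 n k ∧ T4 n k - T3 n k = Y4 n k ∧
    T3 n k - T1 n k = Y2 n k + Y3 n k := by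
  unfold T6 T5 T4 T3 T2 T1
  omega

/-! ### labels and coloring -/

def lab (t1 t2 t3 t4 t5 t6 x : ℕ) : ℕ :=
  if x < t1 then 0 else if x < t2 then 1 else if x < t3 then 2
  else if x < t4 then 3 else if x < t5 then 4 else if x < t6 then 5 else 6

def labM (n k : ℕ) (v : Fin n) : ℕ :=
  lab (T1 n k) (T2 n k) (T3 n k) (T4 n k) (T5 n k) (T6 n k) v.val

lemma labM_lt7 (n k : ℕ) (v : Fin n) : labM n k v < 7 := by
  unfold labM lab; split_ifs <;> omega

def mt : ℕ → ℕ → Fin 3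
  | 0, 2 => 1 | 0, 3 => 2 | 0, 5 => 1 | 0, 6 => 2
  | 1, 2 => 2 | 1, 3 => 1 | 1, 5 => 1 | 1, 6 => 2
  | 2, 5 => 1 | 2, 6 => 2 | 3, 5 => 1 | 3, 6 => 2
  | 4, 5 => 2 | 4, 6 => 1
  | 5, 5 => 1 | 5, 6 => 0 | 6, 6 => 2
  | _, _ => 0

lemma mt0 : ∀ a < 7, ∀ b < 7, mt (min a b) (max a b) = 0 →
    ((a = 0 ∨ a = 1 ∨ a = 4) ∧ (b = 0 ∨ b = 1 ∨ b = 4)) ∨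
    ((a = 2 ∨ a = 3 ∨ a = 4) ∧ (b = 2 ∨ b = 3 ∨ b = 4)) ∨
    (a = 5 ∧ b = 6) ∨ (a = 6 ∧ b = 5) := by
  intro a ha b hb h
  interval_cases a <;> interval_cases b <;> revert h <;> decide

lemma mt1 : ∀ a < 7, ∀ b < 7, mt (min a b) (max a b) = 1 →
    ((a = 0 ∨ a = 2 ∨ a = 5) ∧ (b = 0 ∨ b = 2 ∨ b = 5)) ∨
    ((a = 1 ∨ a = 3 ∨ a = 5) ∧ (b = 1 ∨ b = 3 ∨ b = 5)) ∨
    (a = 6 ∧ b = 4) ∨ (a = 4 ∧ b = 6) := by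
  intro a ha b hb h
  interval_cases a <;> interval_cases b <;> revert h <;> decide

lemma mt2 : ∀ a < 7, ∀ b < 7, mt (min a b) (max a b) = 2 →
    ((a = 0 ∨ a = 3 ∨ a = 6) ∧ (b = 0 ∨ b = 3 ∨ b = 6)) ∨
    ((a = 1 ∨ a = 2 ∨ a = 6) ∧ (b = 1 ∨ b = 2 ∨ b = 6)) ∨
    (a = 4 ∧ b = 5) ∨ (a = 5 ∧ b = 4) := by
  intro a ha b hb h
  interval_cases a <;> interval_cases b <;> revert h <;> decide

def fMain (n k : ℕ) : Sym2 (Fin n) → Fin 3 :=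
  Sym2.lift ⟨fun u v => mt (min (labM n k u) (labM n k v)) (max (labM n k u) (labM n k v)),
    fun u v => by simp only []; rw [min_comm, max_comm]⟩

/-! ### interval membership lemmas -/

lemma memB10 (n k : ℕ) (v : Fin n)
    (h : labM n k v = 0 ∨ labM n k v = 1 ∨ labM n k v = 4) :
    v.val ∈ Finset.Ico 0 (T2 n k) ∪ Finset.Ico (T4 n k) (T5 n k) := by
  simp only [Finset.mem_union, Finset.mem_Ico]
  unfold labM lab at h
  unfold T5 T4 T3 T2 T1 at h ⊢
  rcases h with h|h|h <;> split_ifs at h <;> omega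

lemma memB20 (n k : ℕ) (v : Fin n)
    (h : labM n k v = 2 ∨ labM n k v = 3 ∨ labM n k v = 4) :
    v.val ∈ Finset.Ico (T2 n k) (T5 n k) := by
  simp only [Finset.mem_Ico]
  unfold labM lab at h
  unfold T5 T4 T3 T2 T1 at h ⊢
  rcases h with h|h|h <;> split_ifs at h <;> omega

lemma memB11 (n k : ℕ) (v : Fin n)
    (h : labM n k v = 0 ∨ labM n k v = 2 ∨ labM n k v = 5) :
    v.val ∈ (Finset.Ico 0 (T1 n k) ∪ Finset.Ico (T2 n k) (T3 n k)) ∪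
      Finset.Ico (T5 n k) (T6 n k) := by
  simp only [Finset.mem_union, Finset.mem_Ico]
  unfold labM lab at h
  unfold T6 T5 T4 T3 T2 T1 at h ⊢
  rcases h with h|h|h <;> split_ifs at h <;> omega

lemma memB21 (n k : ℕ) (v : Fin n)
    (h : labM n k v = 1 ∨ labM n k v = 3 ∨ labM n k v = 5) :
    v.val ∈ (Finset.Ico (T1 n k) (T2 n k) ∪ Finset.Ico (T3 n k) (T4 n k)) ∪
      Finset.Ico (T5 n k) (T6 n k) := by
  simp only [Finset.mem_union, Finset.mem_Ico]
  unfold labM lab at h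
  unfold T6 T5 T4 T3 T2 T1 at h ⊢
  rcases h with h|h|h <;> split_ifs at h <;> omega

lemma memB12 (n k : ℕ) (v : Fin n)
    (h : labM n k v = 0 ∨ labM n k v = 3 ∨ labM n k v = 6) :
    v.val ∈ (Finset.Ico 0 (T1 n k) ∪ Finset.Ico (T3 n k) (T4 n k)) ∪
      Finset.Ico (T6 n k) n := by
  simp only [Finset.mem_union, Finset.mem_Ico]
  have hn := v.isLt
  unfold labM lab at h
  unfold T6 T5 T4 T3 T2 T1 at h ⊢
  rcases h with h|h|h <;> split_ifs at h <;> omega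

lemma memB22 (n k : ℕ) (v : Fin n)
    (h : labM n k v = 1 ∨ labM n k v = 2 ∨ labM n k v = 6) :
    v.val ∈ Finset.Ico (T1 n k) (T3 n k) ∪ Finset.Ico (T6 n k) n := by
  simp only [Finset.mem_union, Finset.mem_Ico]
  have hn := v.isLt
  unfold labM lab at h
  unfold T6 T5 T4 T3 T2 T1 at h ⊢
  rcases h with h|h|h <;> split_ifs at h <;> omega

lemma memL4 (n k : ℕ) (v : Fin n) (h : labM n k v = 4) :
    v.val ∈ Finset.Ico (T4 n k) (T5 n k) := by
  simp only [Finset.mem_Ico]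
  unfold labM lab at h
  split_ifs at h <;> omega

lemma memL5 (n k : ℕ) (v : Fin n) (h : labM n k v = 5) :
    v.val ∈ Finset.Ico (T5 n k) (T6 n k) := by
  simp only [Finset.mem_Ico]
  unfold labM lab at h
  split_ifs at h <;> omega

lemma memL6 (n k : ℕ) (v : Fin n) (h : labM n k v = 6) :
    v.val ∈ Finset.Ico (T6 n k) n := by
  simp only [Finset.mem_Ico]
  have hn := v.isLt
  unfold labM lab at h
  split_ifs at h <;> omega


lemma main_case (n k : ℕ) (hk : 1 ≤ k) (hmain : 3*(k-1) < n) :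
    ∀ (i : Fin 3) (H : SimpleGraph (Fin n)) (A : Set (Fin n)),
      H ≤ colorGraph n 3 (fMain n k) i → IsKConnected k (H.induce A) →
      (A.ncard : ℝ) ≤ ((n : ℝ) - k + 3) / 2 := by
  obtain ⟨hw, hkn, ht, hA1, h21, h32, h43⟩ := main_arith n k hk hmain
  obtain ⟨e1, e2, e3, e4, e5, e6, e7, e8⟩ := Tarith n k
  intro i H A hH hA
  suffices hgoal : 2 * A.ncard + k ≤ n + 3 by
    have h' : ((2 * A.ncard + k : ℕ) : ℝ) ≤ ((n + 3 : ℕ) : ℝ) := by exact_mod_cast hgoal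
    push_cast at h'
    linarith
  have hl7 := labM_lt7 n k
  -- membership-in-P/Q style small sets
  have hcard4 : {v : Fin n | labM n k v = 4}.ncard < k := by
    have hb := ncard_le_of_val_mem {v : Fin n | labM n k v = 4}
      (Finset.Ico (T4 n k) (T5 n k)) (fun a ha => memL4 n k a ha)
    rw [Nat.card_Ico] at hb
    omega
  have hcard5 : {v : Fin n | labM n k v = 5}.ncard < k := by
    have hb := ncard_le_of_val_mem {v : Fin n | labM n k v = 5}
      (Finset.Ico (T5 n k) (T6 n k)) (fun a ha => memL5 n k a ha)
    rw [Nat.card_Ico] at hb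
    omega
  have hcard6 : {v : Fin n | labM n k v = 6}.ncard < k := by
    have hb := ncard_le_of_val_mem {v : Fin n | labM n k v = 6}
      (Finset.Ico (T6 n k) n) (fun a ha => memL6 n k a ha)
    rw [Nat.card_Ico] at hb
    omega
  fin_cases i
  · -- color 0
    have hres := master hk
      ({v : Fin n | labM n k v = 0 ∨ labM n k v = 1 ∨ labM n k v = 4})
      ({v : Fin n | labM n k v = 2 ∨ labM n k v = 3 ∨ labM n k v = 4})
      ({v : Fin n | labM n k v = 5}) ({v : Fin n | labM n k v = 6})
      (by
        intro u v hadj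
        have hc := hH hadj
        have hf : mt (min (labM n k u) (labM n k v)) (max (labM n k u) (labM n k v)) = 0 := by
          have h2 := hc.2
          simpa [fMain, Sym2.lift_mk] using h2
        exact mt0 _ (hl7 u) _ (hl7 v) hf)
      (by intro v; simp only [Set.mem_setOf_eq]; have := hl7 v; omega)
      (by intro v; simp only [Set.mem_setOf_eq]; omega)
      (by
        refine lt_of_le_of_lt (Set.ncard_le_ncard ?_ (Set.toFinite _)) hcard4
        intro a ⟨h1, h2⟩
        simp only [Set.mem_setOf_eq] at h1 h2 ⊢
        omega)
      hcard5 hA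
    rcases hres with hsub | hsub
    · have hb := ncard_le_of_val_mem A
        (Finset.Ico 0 (T2 n k) ∪ Finset.Ico (T4 n k) (T5 n k))
        (fun a ha => memB10 n k a (hsub ha))
      have hc := Finset.card_union_le (Finset.Ico 0 (T2 n k)) (Finset.Ico (T4 n k) (T5 n k))
      rw [Nat.card_Ico, Nat.card_Ico] at hc
      omega
    · have hb := ncard_le_of_val_mem A (Finset.Ico (T2 n k) (T5 n k))
        (fun a ha => memB20 n k a (hsub ha))
      rw [Nat.card_Ico] at hb
      have : T5 n k - T2 n k = Y3 n k + Y4 n k + Wp n k := by unfold T5 T4 T3; omega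
      omega
  · -- color 1
    have hres := master hk
      ({v : Fin n | labM n k v = 0 ∨ labM n k v = 2 ∨ labM n k v = 5})
      ({v : Fin n | labM n k v = 1 ∨ labM n k v = 3 ∨ labM n k v = 5})
      ({v : Fin n | labM n k v = 6}) ({v : Fin n | labM n k v = 4})
      (by
        intro u v hadj
        have hc := hH hadj
        have hf : mt (min (labM n k u) (labM n k v)) (max (labM n k u) (labM n k v)) = 1 := by
          have h2 := hc.2
          simpa [fMain, Sym2.lift_mk] using h2
        exact mt1 _ (hl7 u) _ (hl7 v) hf)
      (by intro v; simp only [Set.mem_setOf_eq]; have := hl7 v; omega)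
      (by intro v; simp only [Set.mem_setOf_eq]; omega)
      (by
        refine lt_of_le_of_lt (Set.ncard_le_ncard ?_ (Set.toFinite _)) hcard5
        intro a ⟨h1, h2⟩
        simp only [Set.mem_setOf_eq] at h1 h2 ⊢
        omega)
      hcard6 hA
    rcases hres with hsub | hsub
    · have hb := ncard_le_of_val_mem A
        ((Finset.Ico 0 (T1 n k) ∪ Finset.Ico (T2 n k) (T3 n k)) ∪
          Finset.Ico (T5 n k) (T6 n k))
        (fun a ha => memB11 n k a (hsub ha))
      have hc1 := Finset.card_union_le
        (Finset.Ico 0 (T1 n k) ∪ Finset.Ico (T2 n k) (T3 n k))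
        (Finset.Ico (T5 n k) (T6 n k))
      have hc2 := Finset.card_union_le (Finset.Ico 0 (T1 n k)) (Finset.Ico (T2 n k) (T3 n k))
      simp only [Nat.card_Ico] at hc1 hc2
      omega
    · have hb := ncard_le_of_val_mem A
        ((Finset.Ico (T1 n k) (T2 n k) ∪ Finset.Ico (T3 n k) (T4 n k)) ∪
          Finset.Ico (T5 n k) (T6 n k))
        (fun a ha => memB21 n k a (hsub ha))
      have hc1 := Finset.card_union_le
        (Finset.Ico (T1 n k) (T2 n k) ∪ Finset.Ico (T3 n k) (T4 n k))
        (Finset.Ico (T5 n k) (T6 n k))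
      have hc2 := Finset.card_union_le (Finset.Ico (T1 n k) (T2 n k))
        (Finset.Ico (T3 n k) (T4 n k))
      simp only [Nat.card_Ico] at hc1 hc2
      omega
  · -- color 2
    have hres := master hk
      ({v : Fin n | labM n k v = 0 ∨ labM n k v = 3 ∨ labM n k v = 6})
      ({v : Fin n | labM n k v = 1 ∨ labM n k v = 2 ∨ labM n k v = 6})
      ({v : Fin n | labM n k v = 4}) ({v : Fin n | labM n k v = 5})
      (by
        intro u v hadj
        have hc := hH hadj
        have hf : mt (min (labM n k u) (labM n k v)) (max (labM n k u) (labM n k v)) = 2 := by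
          have h2 := hc.2
          simpa [fMain, Sym2.lift_mk] using h2
        exact mt2 _ (hl7 u) _ (hl7 v) hf)
      (by intro v; simp only [Set.mem_setOf_eq]; have := hl7 v; omega)
      (by intro v; simp only [Set.mem_setOf_eq]; omega)
      (by
        refine lt_of_le_of_lt (Set.ncard_le_ncard ?_ (Set.toFinite _)) hcard6
        intro a ⟨h1, h2⟩
        simp only [Set.mem_setOf_eq] at h1 h2 ⊢
        omega)
      hcard4 hA
    rcases hres with hsub | hsub
    · have hb := ncard_le_of_val_mem A
        ((Finset.Ico 0 (T1 n k) ∪ Finset.Ico (T3 n k) (T4 n k)) ∪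
          Finset.Ico (T6 n k) n)
        (fun a ha => memB12 n k a (hsub ha))
      have hc1 := Finset.card_union_le
        (Finset.Ico 0 (T1 n k) ∪ Finset.Ico (T3 n k) (T4 n k))
        (Finset.Ico (T6 n k) n)
      have hc2 := Finset.card_union_le (Finset.Ico 0 (T1 n k)) (Finset.Ico (T3 n k) (T4 n k))
      simp only [Nat.card_Ico] at hc1 hc2
      omega
    · have hb := ncard_le_of_val_mem A
        (Finset.Ico (T1 n k) (T3 n k) ∪ Finset.Ico (T6 n k) n)
        (fun a ha => memB22 n k a (hsub ha))
      have hc := Finset.card_union_le (Finset.Ico (T1 n k) (T3 n k)) (Finset.Ico (T6 n k) n)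
      rw [Nat.card_Ico, Nat.card_Ico] at hc
      omega


/-! ### Small case : n ≤ 3(k-1) -/

def labS (n : ℕ) (v : Fin n) : ℕ :=
  if v.val < (n+2)/3 then 0 else if v.val < (n+2)/3 + (n+1)/3 then 1 else 2

lemma labS_lt3 (n : ℕ) (v : Fin n) : labS n v < 3 := by
  unfold labS; split_ifs <;> omega

def mtS : ℕ → ℕ → Fin 3
  | 0, 0 => 0 | 1, 1 => 1 | 2, 2 => 2
  | 0, 1 => 2 | 0, 2 => 1 | 1, 2 => 0
  | _, _ => 0

lemma mtS0 : ∀ a < 3, ∀ b < 3, mtS (min a b) (max a b) = 0 →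
    (a = 0 ∧ b = 0) ∨ (a = 1 ∧ b = 2) ∨ (a = 2 ∧ b = 1) := by
  intro a ha b hb h
  interval_cases a <;> interval_cases b <;> revert h <;> decide
lemma mtS1 : ∀ a < 3, ∀ b < 3, mtS (min a b) (max a b) = 1 →
    (a = 1 ∧ b = 1) ∨ (a = 0 ∧ b = 2) ∨ (a = 2 ∧ b = 0) := by
  intro a ha b hb h
  interval_cases a <;> interval_cases b <;> revert h <;> decide
lemma mtS2 : ∀ a < 3, ∀ b < 3, mtS (min a b) (max a b) = 2 →
    (a = 2 ∧ b = 2) ∨ (a = 0 ∧ b = 1) ∨ (a = 1 ∧ b = 0) := by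
  intro a ha b hb h
  interval_cases a <;> interval_cases b <;> revert h <;> decide

def fSmall (n : ℕ) : Sym2 (Fin n) → Fin 3 :=
  Sym2.lift ⟨fun u v => mtS (min (labS n u) (labS n v)) (max (labS n u) (labS n v)),
    fun u v => by simp only []; rw [min_comm, max_comm]⟩

lemma cardS (n k : ℕ) (hk : 1 ≤ k) (hsm : n ≤ 3*(k-1)) (j : ℕ) :
    {v : Fin n | labS n v = j}.ncard < k := by
  have hb := ncard_le_of_val_mem {v : Fin n | labS n v = j}
      (Finset.Ico ((n+2)/3 * (if j = 0 then 0 else 1) + (if j ≤ 1 then 0 else (n+1)/3))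
        (if j = 0 then (n+2)/3 else if j = 1 then (n+2)/3 + (n+1)/3 else n)) ?_
  · rw [Nat.card_Ico] at hb
    split_ifs at hb <;> omega
  · intro a ha
    simp only [Set.mem_setOf_eq] at ha
    have hlt := a.isLt
    simp only [Finset.mem_Ico]
    unfold labS at ha
    split_ifs at ha <;> split_ifs <;> omega

lemma small_case (n k : ℕ) (hk : 1 ≤ k) (hsm : n ≤ 3*(k-1)) :
    ∀ (i : Fin 3) (H : SimpleGraph (Fin n)) (A : Set (Fin n)),
      H ≤ colorGraph n 3 (fSmall n) i → IsKConnected k (H.induce A) →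
      (A.ncard : ℝ) ≤ ((n : ℝ) - k + 3) / 2 := by
  intro i H A hH hA
  exfalso
  have hAcard : k < A.ncard := by
    have h1 := hA.1; rwa [Nat.card_coe_set_eq] at h1
  have hl3 := labS_lt3 n
  have hc0 := cardS n k hk hsm 0
  have hc1 := cardS n k hk hsm 1
  have hc2 := cardS n k hk hsm 2
  have hfin : ∀ (l p q : ℕ), (∀ u v : Fin n, H.Adj u v →
        ((u ∈ {v : Fin n | labS n v = l} ∧ v ∈ {v : Fin n | labS n v = l}) ∨
         (u ∈ (∅ : Set (Fin n)) ∧ v ∈ (∅ : Set (Fin n))) ∨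
         (u ∈ {v : Fin n | labS n v = p} ∧ v ∈ {v : Fin n | labS n v = q}) ∨
         (u ∈ {v : Fin n | labS n v = q} ∧ v ∈ {v : Fin n | labS n v = p}))) →
      ({v : Fin n | labS n v = l} ∪ {v : Fin n | labS n v = p} ∪
        {v : Fin n | labS n v = q} = Set.univ) →
      {v : Fin n | labS n v = l}.ncard < k → {v : Fin n | labS n v = p}.ncard < k →
      l ≠ p → l ≠ q →
      False := by
    intro l p q hle hcov hcl hcp hlp hlq
    have hres := master hk ({v : Fin n | labS n v = l}) (∅ : Set (Fin n))
        ({v : Fin n | labS n v = p}) ({v : Fin n | labS n v = q}) hle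
        (by
          intro v
          have : v ∈ ({v : Fin n | labS n v = l} ∪ {v : Fin n | labS n v = p} ∪
            {v : Fin n | labS n v = q}) := hcov ▸ Set.mem_univ v
          rcases this with (h | h) | h
          · exact Or.inl h
          · exact Or.inr (Or.inr (Or.inl h))
          · exact Or.inr (Or.inr (Or.inr h)))
        (by
          intro v hv hpq
          rcases hv with hv | hv
          · simp only [Set.mem_setOf_eq] at hv
            rcases hpq with h | h <;> simp only [Set.mem_setOf_eq] at h <;> omega
          · exact hv)
        (by
          refine lt_of_le_of_lt (Set.ncard_le_ncard ?_ (Set.toFinite _)) hcl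
          intro a ⟨h1, _⟩; exact h1)
        hcp hA
    rcases hres with hsub | hsub
    · have : A.ncard ≤ {v : Fin n | labS n v = l}.ncard :=
        Set.ncard_le_ncard hsub (Set.toFinite _)
      omega
    · have : A.ncard ≤ (∅ : Set (Fin n)).ncard :=
        Set.ncard_le_ncard hsub (Set.toFinite _)
      simp only [Set.ncard_empty] at this
      omega
  fin_cases i
  · refine hfin 0 1 2 ?_ ?_ hc0 hc1 (by omega) (by omega)
    · intro u v hadj
      have hc := hH hadj
      have hf : mtS (min (labS n u) (labS n v)) (max (labS n u) (labS n v)) = 0 := by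
        have h2 := hc.2
        simpa [fSmall, Sym2.lift_mk] using h2
      rcases mtS0 _ (hl3 u) _ (hl3 v) hf with ⟨h1, h2⟩ | ⟨h1, h2⟩ | ⟨h1, h2⟩
      · exact Or.inl ⟨h1, h2⟩
      · exact Or.inr (Or.inr (Or.inl ⟨h1, h2⟩))
      · exact Or.inr (Or.inr (Or.inr ⟨h1, h2⟩))
    · ext v
      simp only [Set.mem_union, Set.mem_setOf_eq, Set.mem_univ, iff_true]
      have := hl3 v; omega
  · refine hfin 1 0 2 ?_ ?_ hc1 hc0 (by omega) (by omega)
    · intro u v hadj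
      have hc := hH hadj
      have hf : mtS (min (labS n u) (labS n v)) (max (labS n u) (labS n v)) = 1 := by
        have h2 := hc.2
        simpa [fSmall, Sym2.lift_mk] using h2
      rcases mtS1 _ (hl3 u) _ (hl3 v) hf with ⟨h1, h2⟩ | ⟨h1, h2⟩ | ⟨h1, h2⟩
      · exact Or.inl ⟨h1, h2⟩
      · exact Or.inr (Or.inr (Or.inl ⟨h1, h2⟩))
      · exact Or.inr (Or.inr (Or.inr ⟨h1, h2⟩))
    · ext v
      simp only [Set.mem_union, Set.mem_setOf_eq, Set.mem_univ, iff_true]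
      have := hl3 v; omega
  · refine hfin 2 0 1 ?_ ?_ hc2 hc0 (by omega) (by omega)
    · intro u v hadj
      have hc := hH hadj
      have hf : mtS (min (labS n u) (labS n v)) (max (labS n u) (labS n v)) = 2 := by
        have h2 := hc.2
        simpa [fSmall, Sym2.lift_mk] using h2
      rcases mtS2 _ (hl3 u) _ (hl3 v) hf with ⟨h1, h2⟩ | ⟨h1, h2⟩ | ⟨h1, h2⟩
      · exact Or.inl ⟨h1, h2⟩
      · exact Or.inr (Or.inr (Or.inl ⟨h1, h2⟩))
      · exact Or.inr (Or.inr (Or.inr ⟨h1, h2⟩))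
    · ext v
      simp only [Set.mem_union, Set.mem_setOf_eq, Set.mem_univ, iff_true]
      have := hl3 v; omega

end Stmt15

theorem stmt15 (n k : ℕ) (hk : 1 ≤ k) :
    ∃ f : Sym2 (Fin n) → Fin 3,
      ∀ (i : Fin 3) (H : SimpleGraph (Fin n)) (A : Set (Fin n)),
        H ≤ colorGraph n 3 f i → IsKConnected k (H.induce A) →
          (A.ncard : ℝ) ≤ ((n : ℝ) - k + 3) / 2 := by
  by_cases hcase : n ≤ 3*(k-1)
  · exact ⟨Stmt15.fSmall n, Stmt15.small_case n k hk hcase⟩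
  · exact ⟨Stmt15.fMain n k, Stmt15.main_case n k hk (by omega)⟩
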